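/- In the Paley graph on F_q (q a prime power ≡ 1 mod 4), every two adjacent vertices have exactly (q−5)/4 common neighbours and every two distinct non-adjacent vertices have exactly (q−1)/4 common neighbours. -/

import Mathlib

open scoped Classical

lemma paley_key_sum (F : Type*) [Field F] [Fintype F] [DecidableEq F]
    (hF : ringChar F ≠ 2) {a : F} (ha : a ≠ 0) :
    ∑ x : F, quadraticChar F (x * (x + a)) = -1 := by
  have h0 : ∑ x : F, quadraticChar F (x * (x + a)) =
      ∑ x ∈ Finset.univ.erase (0 : F), quadraticChar F (x * (x + a)) := by
    rw [Finset.sum_erase _ (by simp)]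
  rw [h0]
  have h1 : ∀ x ∈ Finset.univ.erase (0 : F),
      quadraticChar F (x * (x + a)) = quadraticChar F (1 + a * x⁻¹) := by
    intro x hx
    have hx0 : x ≠ 0 := Finset.ne_of_mem_erase hx
    have : x * (x + a) = x ^ 2 * (1 + a * x⁻¹) := by field_simp
    rw [this, map_mul, quadraticChar_sq_one' hx0, one_mul]
  rw [Finset.sum_congr rfl h1]
  have h2 : ∑ x ∈ Finset.univ.erase (0 : F), quadraticChar F (1 + a * x⁻¹) =
      ∑ y ∈ Finset.univ.erase (1 : F), quadraticChar F y := by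
    apply Finset.sum_nbij' (fun x => 1 + a * x⁻¹) (fun y => a * (y - 1)⁻¹)
    · intro x hx
      have hx0 : x ≠ 0 := Finset.ne_of_mem_erase hx
      simp only [Finset.mem_erase, Finset.mem_univ, and_true]
      intro h
      apply hx0
      have : a * x⁻¹ = 0 := by linear_combination h
      rcases mul_eq_zero.1 this with h' | h'
      · exact absurd h' ha
      · exact inv_eq_zero.1 h'
    · intro y hy
      have hy1 : y ≠ 1 := Finset.ne_of_mem_erase hy
      simp only [Finset.mem_erase, Finset.mem_univ, and_true]
      intro h
      rcases mul_eq_zero.1 h with h' | h'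
      · exact ha h'
      · exact hy1 (sub_eq_zero.1 (inv_eq_zero.1 h'))
    · intro x hx
      have hx0 : x ≠ 0 := Finset.ne_of_mem_erase hx
      field_simp
      simp [ha]
    · intro y hy
      have hy1 : y ≠ 1 := Finset.ne_of_mem_erase hy
      have : y - 1 ≠ 0 := sub_ne_zero.2 hy1
      field_simp
      ring
    · intro x hx; rfl
  rw [h2, Finset.sum_erase_eq_sub (Finset.mem_univ 1), quadraticChar_sum_zero hF, map_one]
  norm_num

/-- In the Paley graph on `F_q` (`q` a prime power `≡ 1 (mod 4)`), every two adjacent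
vertices have exactly `(q−5)/4` common neighbours and every two distinct non-adjacent
vertices have exactly `(q−1)/4` common neighbours. -/
theorem paley_common_neighbours (F : Type*) [Field F] [Fintype F] [DecidableEq F]
    (hq : Fintype.card F % 4 = 1)
    (v w : F) (hvw : v ≠ w) :
    (IsSquare (v - w) →
      (Finset.univ.filter
          (fun u : F => (u ≠ v ∧ IsSquare (u - v)) ∧ (u ≠ w ∧ IsSquare (u - w)))).card
        = (Fintype.card F - 5) / 4) ∧
    (¬ IsSquare (v - w) →
      (Finset.univ.filter
          (fun u : F => (u ≠ v ∧ IsSquare (u - v)) ∧ (u ≠ w ∧ IsSquare (u - w)))).card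
        = (Fintype.card F - 1) / 4) := by
  have hF : ringChar F ≠ 2 := by
    intro h
    have := FiniteField.even_card_iff_char_two.1 h
    omega
  set χ := quadraticChar F with hχ
  set q := Fintype.card F with hqdef
  set N := (Finset.univ.filter
      (fun u : F => (u ≠ v ∧ IsSquare (u - v)) ∧ (u ≠ w ∧ IsSquare (u - w)))).card with hN
  have hvw0 : v - w ≠ 0 := sub_ne_zero.2 hvw
  -- χ(-1) = 1
  have hm1 : χ (-1) = 1 := by
    rw [hχ, quadraticChar_one_iff_isSquare (neg_ne_zero.2 one_ne_zero)]
    exact FiniteField.isSquare_neg_one_iff.2 (by omega)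
  have hneg : χ (w - v) = χ (v - w) := by
    have : (w - v) = (-1) * (v - w) := by ring
    rw [this, map_mul, hm1, one_mul]
  -- sum of χ(u - c) over all u is 0
  have hsum0 : ∀ c : F, ∑ u : F, χ (u - c) = 0 := by
    intro c
    exact (Fintype.sum_equiv (Equiv.subRight c) _ (fun x => χ x) (fun u => rfl)).trans
      (quadraticChar_sum_zero hF)
  -- sum of products
  have hprod : ∑ u : F, χ (u - v) * χ (u - w) = -1 := by
    exact (Fintype.sum_equiv (Equiv.subRight v) _
        (fun x => χ (x * (x + (v - w)))) (fun u => by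
          rw [← map_mul]; congr 1; rw [Equiv.subRight_apply]; ring)).trans
      (paley_key_sum F hF hvw0)
  set g : F → ℤ := fun u => (1 + χ (u - v)) * (1 + χ (u - w)) with hg
  -- total sum
  have htot : ∑ u : F, g u = (q : ℤ) - 1 := by
    have : ∀ u : F, g u = 1 + χ (u - v) + χ (u - w) + χ (u - v) * χ (u - w) := by
      intro u; rw [hg]; ring
    rw [Finset.sum_congr rfl (fun u _ => this u), Finset.sum_add_distrib,
      Finset.sum_add_distrib, Finset.sum_add_distrib, hsum0 v, hsum0 w, hprod,
      Finset.sum_const, Finset.card_univ]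
    simp only [hqdef, nsmul_eq_mul, mul_one]
    ring
  -- split off {v, w}
  have hsplit : ∑ u ∈ Finset.univ \ {v, w}, g u + (g v + g w) = ∑ u : F, g u := by
    rw [← Finset.sum_pair hvw]
    exact Finset.sum_sdiff (Finset.subset_univ _)
  have h0 : χ (0 : F) = 0 := quadraticChar_zero
  have hgv : g v = 1 + χ (v - w) := by
    simp only [hg]; rw [sub_self, h0]; ring
  have hgw : g w = 1 + χ (v - w) := by
    simp only [hg]; rw [sub_self, h0, hneg]; ring
  -- the sum over the complement equals 4N
  have hmain : ∑ u ∈ Finset.univ \ {v, w}, g u = 4 * (N : ℤ) := by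
    rw [← Finset.sum_filter_add_sum_filter_not (Finset.univ \ {v, w})
      (fun u => IsSquare (u - v) ∧ IsSquare (u - w)) g]
    have h1 : ∀ u ∈ (Finset.univ \ {v, w}).filter
        (fun u => IsSquare (u - v) ∧ IsSquare (u - w)), g u = 4 := by
      intro u hu
      simp only [Finset.mem_filter, Finset.mem_sdiff, Finset.mem_univ, true_and,
        Finset.mem_insert, Finset.mem_singleton, not_or] at hu
      obtain ⟨⟨huv, huw⟩, hsv, hsw⟩ := hu
      have e1 : χ (u - v) = 1 := (quadraticChar_one_iff_isSquare (sub_ne_zero.2 huv)).2 hsv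
      have e2 : χ (u - w) = 1 := (quadraticChar_one_iff_isSquare (sub_ne_zero.2 huw)).2 hsw
      show (1 + χ (u - v)) * (1 + χ (u - w)) = 4
      rw [e1, e2]; norm_num
    have h2 : ∀ u ∈ (Finset.univ \ {v, w}).filter
        (fun u => ¬(IsSquare (u - v) ∧ IsSquare (u - w))), g u = 0 := by
      intro u hu
      simp only [Finset.mem_filter, Finset.mem_sdiff, Finset.mem_univ, true_and,
        Finset.mem_insert, Finset.mem_singleton, not_or] at hu
      obtain ⟨⟨huv, huw⟩, hns⟩ := hu
      show (1 + χ (u - v)) * (1 + χ (u - w)) = 0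
      rcases not_and_or.1 hns with h | h
      · have e : χ (u - v) = -1 := quadraticChar_neg_one_iff_not_isSquare.2 h
        rw [e]; ring
      · have e : χ (u - w) = -1 := quadraticChar_neg_one_iff_not_isSquare.2 h
        rw [e]; ring
    rw [Finset.sum_congr rfl h1, Finset.sum_congr rfl h2, Finset.sum_const,
      Finset.sum_const, smul_zero, add_zero]
    have hset : (Finset.univ \ {v, w}).filter
        (fun u => IsSquare (u - v) ∧ IsSquare (u - w)) =
        Finset.univ.filter
          (fun u : F => (u ≠ v ∧ IsSquare (u - v)) ∧ (u ≠ w ∧ IsSquare (u - w))) := by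
      ext u
      simp only [Finset.mem_filter, Finset.mem_sdiff, Finset.mem_univ, true_and,
        Finset.mem_insert, Finset.mem_singleton, not_or]
      tauto
    rw [hset, ← hN]
    -- cast
    ring
  -- the key equation
  have hkey : 4 * (N : ℤ) = (q : ℤ) - 3 - 2 * χ (v - w) := by
    rw [← hmain]
    have := hsplit
    rw [htot, hgv, hgw] at this
    linarith
  constructor
  · intro hsq
    rw [(quadraticChar_one_iff_isSquare hvw0).2 hsq] at hkey
    have hq5 : (q : ℤ) = 4 * N + 5 := by linarith
    have : q = 4 * N + 5 := by exact_mod_cast hq5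
    omega
  · intro hnsq
    rw [(quadraticChar_neg_one_iff_not_isSquare).2 hnsq] at hkey
    have hq1 : (q : ℤ) = 4 * N + 1 := by linarith
    have : q = 4 * N + 1 := by exact_mod_cast hq1
    omega
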